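/- arXiv:1401.0407 — 3 statements merged into one kernel-verified Lean document; each statement's English description precedes it below -/
import Mathlib

section
/- Let N ≥ 2, let r₁, …, r_N be positive reals, and let a₁, …, a_N be reals with 0 ≤ a_j ≤ r_j for every j. Then Σ_{j=1}^{N−1} a_j · Σ_{k=j+1}^{N} a_k² / (r_j + r_{j+1} + … + r_k)² ≤ Σ_{j=1}^{N} a_j. -/
lemma marcinkiewicz_aux (N : ℕ) (r a : ℕ → ℝ)
    (hr : ∀ j, 1 ≤ j → j ≤ N → 0 < r j)
    (ha₀ : ∀ j, 1 ≤ j → j ≤ N → 0 ≤ a j)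
    (har : ∀ j, 1 ≤ j → j ≤ N → a j ≤ r j)
    (k : ℕ) (hk1 : 1 ≤ k) (hkN : k ≤ N) :
    ∀ n m, 1 ≤ m → m + n = k →
      ∑ j ∈ Finset.Icc m (k - 1), a j / (∑ i ∈ Finset.Icc j k, r i) ^ 2
        ≤ 1 / r k - 1 / (∑ i ∈ Finset.Icc m k, r i) := by
  intro n
  induction n with
  | zero =>
    intro m hm hmk
    have hmk' : m = k := by omega
    subst hmk'
    rw [Finset.Icc_eq_empty (by omega), Finset.sum_empty,
      show Finset.Icc m m = {m} by simp, Finset.sum_singleton, sub_self]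
  | succ n ih =>
    intro m hm hmk
    have hm1k : m + 1 ≤ k := by omega
    have hins : ∀ b, m ≤ b → Finset.Icc m b = insert m (Finset.Icc (m + 1) b) := by
      intro b hb
      ext x
      simp [Finset.mem_Icc, Finset.mem_insert]
      omega
    have hS1pos : 0 < ∑ i ∈ Finset.Icc (m + 1) k, r i := by
      apply Finset.sum_pos
      · intro i hi
        simp [Finset.mem_Icc] at hi
        exact hr i (by omega) (by omega)
      · exact Finset.nonempty_Icc.2 hm1k
    have hSsplit : ∑ i ∈ Finset.Icc m k, r i = r m + ∑ i ∈ Finset.Icc (m + 1) k, r i := by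
      rw [hins k (by omega), Finset.sum_insert (by simp)]
    have hrm : 0 < r m := hr m hm (by omega)
    have hS0pos : 0 < ∑ i ∈ Finset.Icc m k, r i := by rw [hSsplit]; positivity
    set S₀ := ∑ i ∈ Finset.Icc m k, r i
    set S₁ := ∑ i ∈ Finset.Icc (m + 1) k, r i
    have key : a m / S₀ ^ 2 ≤ 1 / S₁ - 1 / S₀ := by
      have h1 : (1 : ℝ) / S₁ - 1 / S₀ = r m / (S₀ * S₁) := by
        field_simp
        rw [hSsplit]; ring
      rw [h1]
      refine div_le_div₀ (le_of_lt hrm) (har m hm (by omega)) (by positivity) ?_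
      have : S₁ ≤ S₀ := by rw [hSsplit]; linarith
      nlinarith
    have hrest := ih (m + 1) (by omega) (by omega)
    rw [hins (k - 1) (by omega), Finset.sum_insert (by simp)]
    linarith

/-- **Inequality (6.4) of Eiderman–Reznikov–Volberg.** If `N ≥ 2`, `r₁, …, r_N > 0` and
`0 ≤ a_j ≤ r_j`, then
`Σ_{j=1}^{N−1} a_j · Σ_{k=j+1}^{N} a_k² / (r_j + … + r_k)² ≤ Σ_{j=1}^{N} a_j`. -/
theorem marcinkiewicz_double_sum (N : ℕ) (hN : 2 ≤ N) (r a : ℕ → ℝ)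
    (hr : ∀ j, 1 ≤ j → j ≤ N → 0 < r j)
    (ha₀ : ∀ j, 1 ≤ j → j ≤ N → 0 ≤ a j)
    (har : ∀ j, 1 ≤ j → j ≤ N → a j ≤ r j) :
    ∑ j ∈ Finset.Icc 1 (N - 1), a j *
        ∑ k ∈ Finset.Icc (j + 1) N, (a k) ^ 2 / (∑ i ∈ Finset.Icc j k, r i) ^ 2 ≤
      ∑ j ∈ Finset.Icc 1 N, a j := by
  calc ∑ j ∈ Finset.Icc 1 (N - 1), a j *
        ∑ k ∈ Finset.Icc (j + 1) N, (a k) ^ 2 / (∑ i ∈ Finset.Icc j k, r i) ^ 2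
      = ∑ j ∈ Finset.Icc 1 (N - 1), ∑ k ∈ Finset.Icc (j + 1) N,
          a j * ((a k) ^ 2 / (∑ i ∈ Finset.Icc j k, r i) ^ 2) := by
        simp [Finset.mul_sum]
    _ = ∑ k ∈ Finset.Icc 2 N, ∑ j ∈ Finset.Icc 1 (k - 1),
          a j * ((a k) ^ 2 / (∑ i ∈ Finset.Icc j k, r i) ^ 2) := by
        apply Finset.sum_comm'
        intro x y
        simp only [Finset.mem_Icc]
        omega
    _ ≤ ∑ k ∈ Finset.Icc 2 N, a k := by
        apply Finset.sum_le_sum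
        intro k hk
        simp only [Finset.mem_Icc] at hk
        have hrk : 0 < r k := hr k (by omega) hk.2
        have h1 : ∑ j ∈ Finset.Icc 1 (k - 1),
            a j * ((a k) ^ 2 / (∑ i ∈ Finset.Icc j k, r i) ^ 2)
            = a k ^ 2 * ∑ j ∈ Finset.Icc 1 (k - 1),
                a j / (∑ i ∈ Finset.Icc j k, r i) ^ 2 := by
          rw [Finset.mul_sum]
          exact Finset.sum_congr rfl fun j hj => by ring
        rw [h1]
        have h2 := marcinkiewicz_aux N r a hr ha₀ har k (by omega) hk.2 (k - 1) 1
          le_rfl (by omega)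
        have hS1pos : 0 < ∑ i ∈ Finset.Icc 1 k, r i := by
          apply Finset.sum_pos
          · intro i hi
            simp [Finset.mem_Icc] at hi
            exact hr i (by omega) (by omega)
          · exact Finset.nonempty_Icc.2 (by omega)
        have h3 : ∑ j ∈ Finset.Icc 1 (k - 1), a j / (∑ i ∈ Finset.Icc j k, r i) ^ 2
            ≤ 1 / r k := by
          have : (0 : ℝ) < 1 / (∑ i ∈ Finset.Icc 1 k, r i) := by positivity
          linarith
        have h4 : a k ^ 2 * (1 / r k) ≤ a k := by
          rw [mul_one_div, div_le_iff₀ hrk]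
          nlinarith [ha₀ k (by omega) hk.2, har k (by omega) hk.2]
        calc a k ^ 2 * ∑ j ∈ Finset.Icc 1 (k - 1), a j / (∑ i ∈ Finset.Icc j k, r i) ^ 2
            ≤ a k ^ 2 * (1 / r k) := by
              exact mul_le_mul_of_nonneg_left h3 (sq_nonneg _)
          _ ≤ a k := h4
    _ ≤ ∑ j ∈ Finset.Icc 1 N, a j := by
        apply Finset.sum_le_sum_of_subset_of_nonneg
        · exact Finset.Icc_subset_Icc_left (by omega)
        · intro i hi _
          simp [Finset.mem_Icc] at hi
          exact ha₀ i (by omega) hi.2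
end

section
/- Let λ > 1 and λ′ = (1+λ)/2. Let D_i = D(x_i, r_i) be a finite or countable family of λ-separated discs, each of which has non-empty intersection with the real line ℝ ⊂ ℂ, and set Q_i = λ′D_i = D(x_i, λ′·r_i). Then there exists a constant A₁ = A₁(λ), depending only on λ, such that for every index j, Σ_{i ≠ j} r_i / dist(Q_i, Q_j)² ≤ A₁ / r_j, where dist(Q_i, Q_j) denotes the Euclidean distance between the sets Q_i and Q_j. -/
open Metric Set

/-- The (infimal) distance between two subsets of `ℂ`. -/
noncomputable def setDist (s t : Set ℂ) : ℝ := sInf (Set.image2 dist s t)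


theorem exists_common' {u v ρ σ : ℝ} (hρ0 : 0 < ρ) (hσ0 : 0 < σ) (h : |u - v| < ρ + σ) :
    ∃ t : ℝ, |t - u| < ρ ∧ |t - v| < σ := by
  have h1 : u - v < ρ + σ := (abs_lt.1 h).2
  have h2 : -(ρ + σ) < u - v := (abs_lt.1 h).1
  have hρ : 0 < ρ + σ := lt_of_le_of_lt (abs_nonneg _) h
  refine ⟨(max (u - ρ) (v - σ) + min (u + ρ) (v + σ)) / 2, ?_, ?_⟩ <;>
  · have hA : max (u - ρ) (v - σ) < min (u + ρ) (v + σ) := by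
      rw [max_lt_iff, lt_min_iff, lt_min_iff]
      refine ⟨⟨?_, ?_⟩, ?_, ?_⟩ <;> linarith
    have l1 : u - ρ ≤ max (u - ρ) (v - σ) := le_max_left _ _
    have l1' : v - σ ≤ max (u - ρ) (v - σ) := le_max_right _ _
    have l2 : min (u + ρ) (v + σ) ≤ u + ρ := min_le_left _ _
    have l2' : min (u + ρ) (v + σ) ≤ v + σ := min_le_right _ _
    rw [abs_lt]; constructor <;> linarith

theorem sum_inv_sub_inv' {ι : Type*} [DecidableEq ι] (a b : ι → ℝ) :
    ∀ s : Finset ι, ∀ L : ℝ, 0 < L → (∀ i ∈ s, L ≤ a i) → (∀ i ∈ s, a i < b i) →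
      (∀ i ∈ s, ∀ k ∈ s, i ≠ k → b i ≤ a k ∨ b k ≤ a i) →
      ∑ i ∈ s, (1 / a i - 1 / b i) ≤ 1 / L := by
  intro s
  induction s using Finset.strongInduction with
  | _ s ih =>
    intro L hL ha hab hd
    rcases s.eq_empty_or_nonempty with rfl | hne
    · simp; positivity
    · obtain ⟨i₀, hi₀, hmin⟩ := s.exists_min_image a hne
      have hbpos : 0 < b i₀ := lt_trans (lt_of_lt_of_le hL (ha i₀ hi₀)) (hab i₀ hi₀)
      have key : ∀ k ∈ s.erase i₀, b i₀ ≤ a k := by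
        intro k hk
        have hks : k ∈ s := Finset.mem_of_mem_erase hk
        have hne' : i₀ ≠ k := fun h => (Finset.ne_of_mem_erase hk) h.symm
        rcases hd i₀ hi₀ k hks hne' with h | h
        · exact h
        · exact absurd (lt_of_le_of_lt (le_trans h (hmin k hks)) (hab k hks)) (lt_irrefl _)
      have hrec := ih (s.erase i₀) (Finset.erase_ssubset hi₀) (b i₀) hbpos
        (fun k hk => key k hk)
        (fun k hk => hab k (Finset.mem_of_mem_erase hk))
        (fun i hi k hk hik => hd i (Finset.mem_of_mem_erase hi) k (Finset.mem_of_mem_erase hk) hik)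
      rw [← Finset.add_sum_erase _ _ hi₀]
      have hfin : 1 / a i₀ ≤ 1 / L := one_div_le_one_div_of_le hL (ha i₀ hi₀)
      linarith


theorem side_sum' {ι : Type*} [DecidableEq ι] (s : Finset ι) (u ρ : ι → ℝ) (R : ℝ) (hR : 0 < R)
    (hρ : ∀ i ∈ s, 0 < ρ i) (hu : ∀ i ∈ s, ρ i + R ≤ u i)
    (hsep : ∀ i ∈ s, ∀ k ∈ s, i ≠ k → ρ i + ρ k ≤ |u i - u k|) :
    ∑ i ∈ s, ρ i / u i ^ 2 ≤ 1 / R := by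
  have key := sum_inv_sub_inv' (fun i => u i - ρ i) (fun i => u i + ρ i) s R hR
    (fun i hi => by have := hu i hi; linarith)
    (fun i hi => by have := hρ i hi; linarith)
    (by
      intro i hi k hk hik
      rcases le_abs.1 (hsep i hi k hk hik) with h | h
      · right; linarith
      · left; linarith)
  refine le_trans (Finset.sum_le_sum ?_) key
  intro i hi
  have h1 : 0 < ρ i := hρ i hi
  have h2 : ρ i + R ≤ u i := hu i hi
  have ha : 0 < u i - ρ i := by linarith
  have hb : 0 < u i + ρ i := by linarith
  have hU : 0 < u i := by linarith
  rw [div_sub_div _ _ (ne_of_gt ha) (ne_of_gt hb)]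
  rw [div_le_div_iff₀ (by positivity) (by positivity)]
  nlinarith [mul_pos h1 (mul_pos h1 h1), mul_pos h1 (mul_pos hU hU)]

theorem core_sum' {ι : Type*} [DecidableEq ι] (s : Finset ι) (j : ι) (hj : j ∉ s) (p ρ : ι → ℝ)
    (hρ : ∀ i, 0 < ρ i)
    (hsep : ∀ i k, i ≠ k → ρ i + ρ k ≤ |p i - p k|) :
    ∑ i ∈ s, ρ i / (p i - p j) ^ 2 ≤ 2 / ρ j := by
  classical
  have hsplit := Finset.sum_filter_add_sum_filter_not s (fun i => p j < p i)
    (fun i => ρ i / (p i - p j) ^ 2)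
  have h1 : ∑ i ∈ s.filter (fun i => p j < p i), ρ i / (p i - p j) ^ 2 ≤ 1 / ρ j := by
    apply side_sum' _ (fun i => p i - p j) ρ (ρ j) (hρ j)
    · exact fun i _ => hρ i
    · intro i hi
      rw [Finset.mem_filter] at hi
      have hij : i ≠ j := fun h => hj (h ▸ hi.1)
      have := hsep i j hij
      rw [abs_of_pos (by linarith [hi.2] : (0:ℝ) < p i - p j)] at this
      linarith
    · intro i hi k hk hik
      have := hsep i k hik
      have e : p i - p j - (p k - p j) = p i - p k := by ring
      rw [e]; exact this
  have h2 : ∑ i ∈ s.filter (fun i => ¬ p j < p i), ρ i / (p i - p j) ^ 2 ≤ 1 / ρ j := by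
    have hrw : ∀ i ∈ s.filter (fun i => ¬ p j < p i),
        ρ i / (p i - p j) ^ 2 = ρ i / (p j - p i) ^ 2 := by
      intro i _
      have : (p i - p j) ^ 2 = (p j - p i) ^ 2 := by ring
      rw [this]
    rw [Finset.sum_congr rfl hrw]
    apply side_sum' _ (fun i => p j - p i) ρ (ρ j) (hρ j)
    · exact fun i _ => hρ i
    · intro i hi
      rw [Finset.mem_filter] at hi
      have hij : i ≠ j := fun h => hj (h ▸ hi.1)
      have h := hsep i j hij
      have hle : p i ≤ p j := le_of_not_gt hi.2
      rw [abs_of_nonpos (by linarith : p i - p j ≤ 0)] at h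
      linarith
    · intro i hi k hk hik
      have := hsep i k hik
      have e : p j - p i - (p j - p k) = -(p i - p k) := by ring
      rw [e, abs_neg]; exact this
  have : (2:ℝ) / ρ j = 1 / ρ j + 1 / ρ j := by ring
  rw [← hsplit, this]
  exact add_le_add h1 h2


theorem setDist_lower' (x y : ℂ) (a b : ℝ) (ha : 0 < a) (hb : 0 < b) :
    dist x y - a - b ≤ setDist (ball x a) (ball y b) := by
  apply le_csInf ((nonempty_ball.2 ha).image2 (nonempty_ball.2 hb))
  rintro d ⟨z, hz, w, hw, rfl⟩
  have h1 : dist z x < a := mem_ball.1 hz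
  have h2 : dist w y < b := mem_ball.1 hw
  have h3 := dist_triangle4 x z w y
  rw [dist_comm x z] at h3
  linarith

theorem dist_centers' {x y : ℂ} {a b : ℝ} (ha : 0 < a) (hb : 0 < b)
    (h : Disjoint (ball x a) (ball y b)) : a + b ≤ dist x y :=
  (disjoint_ball_ball_iff ha hb).1 h


/-- **The Marcinkiewicz-type estimate from the proof of Theorem 2.1 of
Eiderman–Reznikov–Volberg.** Let `λ > 1`, `λ' = (1+λ)/2`, and let `D_i = D(x_i, r_i)` be
a finite or countable family of `λ`-separated discs each meeting the real line; set
`Q_i = λ'D_i`. Then there is `A₁ = A₁(λ)` with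
`Σ_{i ≠ j} r_i / dist(Q_i, Q_j)² ≤ A₁ / r_j` for every `j`. -/
theorem marcinkiewicz_sum_bound (lam : ℝ) (hlam : 1 < lam) :
    ∃ A₁ : ℝ,
      ∀ (ι : Type) [Countable ι] (x : ι → ℂ) (r : ι → ℝ),
        (∀ i, 0 < r i) →
        (∀ i, (ball (x i) (r i) ∩ {z : ℂ | z.im = 0}).Nonempty) →
        (Pairwise fun i k => Disjoint (ball (x i) (lam * r i)) (ball (x k) (lam * r k))) →
        ∀ (j : ι) (s : Finset ι), j ∉ s →
          ∑ i ∈ s, r i /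
              (setDist (ball (x i) ((1 + lam) / 2 * r i))
                (ball (x j) ((1 + lam) / 2 * r j))) ^ 2 ≤ A₁ / r j := by
  classical
  have hl0 : 0 < lam - 1 := by linarith
  have hl3 : 0 < 3 + lam := by linarith
  set c₀ : ℝ := (lam - 1) / (2 * (3 + lam)) with hc₀def
  have hc₀pos : 0 < c₀ := by positivity
  have hc₀half : c₀ ≤ 1 / 2 := by
    rw [hc₀def, div_le_div_iff₀ (by positivity) (by norm_num)]
    linarith
  refine ⟨2 / (c₀ ^ 2 * (lam - 1) ^ 2), ?_⟩
  intro ι _ x r hr hreal hdisj j s hjs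
  choose z hz using hreal
  set p : ι → ℝ := fun i => (z i).re with hpdef
  have hzeq : ∀ i, z i = (p i : ℂ) := by
    intro i
    apply Complex.ext
    · simp [hpdef]
    · simpa using (hz i).2
  have hzball : ∀ i, dist (z i) (x i) < r i := fun i => mem_ball.1 (hz i).1
  set ρ : ι → ℝ := fun i => (lam - 1) * r i with hρdef
  have hρpos : ∀ i, 0 < ρ i := fun i => by
    have := hr i; positivity
  -- separation of the real points p i
  have hpsep : ∀ i k, i ≠ k → ρ i + ρ k ≤ |p i - p k| := by
    intro i k hik
    by_contra hc
    push_neg at hc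
    obtain ⟨t, ht1, ht2⟩ := exists_common' (hρpos i) (hρpos k) hc
    have hmem : ∀ m, |t - p m| < ρ m → ((t : ℂ)) ∈ ball (x m) (lam * r m) := by
      intro m h1
      rw [mem_ball]
      have hdz : dist (t : ℂ) (z m) = |t - p m| := by
        rw [hzeq m, Complex.dist_eq, ← Complex.ofReal_sub, Complex.norm_real, Real.norm_eq_abs]
      calc dist (t : ℂ) (x m) ≤ dist (t : ℂ) (z m) + dist (z m) (x m) := dist_triangle _ _ _
        _ < ρ m + r m := by have := hzball m; rw [hdz]; linarith
        _ = lam * r m := by rw [hρdef]; ring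
    exact Set.disjoint_left.1 (hdisj hik) (hmem i ht1) (hmem k ht2)
  -- lower bound on the set distances
  have hQ : ∀ i, i ≠ j → c₀ * |p i - p j| ≤
      setDist (ball (x i) ((1 + lam) / 2 * r i)) (ball (x j) ((1 + lam) / 2 * r j)) := by
    intro i hij
    have hri := hr i; have hrj := hr j
    have hcent : lam * r i + lam * r j ≤ dist (x i) (x j) :=
      (disjoint_ball_ball_iff (by positivity) (by positivity)).1 (hdisj hij)
    have hA := setDist_lower' (x i) (x j) ((1 + lam) / 2 * r i) ((1 + lam) / 2 * r j)
      (by positivity) (by positivity)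
    have hup : |p i - p j| ≤ dist (x i) (x j) + r i + r j := by
      have h1 : |p i - p j| = dist (z i) (z j) := by
        rw [hzeq i, hzeq j, Complex.dist_eq, ← Complex.ofReal_sub, Complex.norm_real, Real.norm_eq_abs]
      have h4 := dist_triangle4 (z i) (x i) (x j) (z j)
      rw [dist_comm (x j) (z j)] at h4
      have := hzball i; have := hzball j
      linarith [h1 ▸ h4]
    set d := setDist (ball (x i) ((1 + lam) / 2 * r i)) (ball (x j) ((1 + lam) / 2 * r j))
    set u := |p i - p j| with hu
    have hu0 : 0 ≤ u := abs_nonneg _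
    rcases le_or_gt u ((3 + lam) * (r i + r j)) with hcase | hcase
    · have step1 : c₀ * u ≤ c₀ * ((3 + lam) * (r i + r j)) :=
        mul_le_mul_of_nonneg_left hcase hc₀pos.le
      have step2 : c₀ * ((3 + lam) * (r i + r j)) = (lam - 1) / 2 * (r i + r j) := by
        rw [hc₀def]; field_simp
      linarith
    · have step1 : u / 2 ≤ d := by linarith
      have step2 : c₀ * u ≤ u / 2 := by nlinarith
      linarith
  -- term-wise comparison and conclusion
  have hterm : ∀ i ∈ s, r i /
      (setDist (ball (x i) ((1 + lam) / 2 * r i)) (ball (x j) ((1 + lam) / 2 * r j))) ^ 2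
      ≤ 1 / (c₀ ^ 2 * (lam - 1)) * (ρ i / (p i - p j) ^ 2) := by
    intro i hi
    have hij : i ≠ j := fun h => hjs (h ▸ hi)
    have hupos : 0 < |p i - p j| := lt_of_lt_of_le (add_pos (hρpos i) (hρpos j)) (hpsep i j hij)
    have hd := hQ i hij
    have hd0 : 0 < c₀ * |p i - p j| := by positivity
    set d := setDist (ball (x i) ((1 + lam) / 2 * r i)) (ball (x j) ((1 + lam) / 2 * r j))
    have hdpos : 0 < d := lt_of_lt_of_le hd0 hd
    have hsq : (c₀ * |p i - p j|) ^ 2 ≤ d ^ 2 := by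
      apply pow_le_pow_left₀ hd0.le hd
    have h1 : r i / d ^ 2 ≤ r i / (c₀ * |p i - p j|) ^ 2 := by
      apply div_le_div_of_nonneg_left (hr i).le (by positivity) hsq
    have h2 : r i / (c₀ * |p i - p j|) ^ 2
        = 1 / (c₀ ^ 2 * (lam - 1)) * (ρ i / (p i - p j) ^ 2) := by
      rw [mul_pow, sq_abs, hρdef]
      have hppos : (0:ℝ) < (p i - p j) ^ 2 := by
        have h0 : p i - p j ≠ 0 := abs_pos.1 hupos
        positivity
      field_simp
    linarith [h1, h2.le, h2.ge]
  calc ∑ i ∈ s, r i /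
      (setDist (ball (x i) ((1 + lam) / 2 * r i)) (ball (x j) ((1 + lam) / 2 * r j))) ^ 2
      ≤ ∑ i ∈ s, 1 / (c₀ ^ 2 * (lam - 1)) * (ρ i / (p i - p j) ^ 2) :=
        Finset.sum_le_sum hterm
    _ = 1 / (c₀ ^ 2 * (lam - 1)) * ∑ i ∈ s, ρ i / (p i - p j) ^ 2 := by
        rw [Finset.mul_sum]
    _ ≤ 1 / (c₀ ^ 2 * (lam - 1)) * (2 / ρ j) := by
        apply mul_le_mul_of_nonneg_left _ (by positivity)
        exact core_sum' s j hjs p ρ hρpos hpsep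
    _ = 2 / (c₀ ^ 2 * (lam - 1) ^ 2) / r j := by
        rw [hρdef]
        have := hr j
        field_simp
end

section
/- Let Γ ⊂ ℂ be a chord-arc curve with constant A₀ > 1, let λ > 1, and let D_j = D(x_j, r_j) be λ-separated discs with centers x_j ∈ Γ. Let μ_j be positive Borel measures with supp μ_j ⊂ D_j and with linear growth μ_j(D(y, s)) ≤ s for every disc D(y, s) ⊂ ℂ, and set μ = Σ_j μ_j. Then there exists a constant C = C(A₀, λ) such that μ(D(x, r)) ≤ C·r for every disc D(x, r) ⊂ ℂ. -/
open MeasureTheory Metric Filter Set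
open scoped ENNReal NNReal

/-- `Γ ⊆ ℂ` is a chord-arc curve with constant `A₀`: it has an arc-length
parametrization `z` on an interval `[0, L]` (so `‖z t − z s‖ ≤ |t − s|`)
satisfying `|t − s| ≤ A₀·‖z t − z s‖`. -/
def IsChordArc (Γ : Set ℂ) (A₀ : ℝ) : Prop :=
  ∃ L : ℝ, 0 < L ∧ ∃ z : ℝ → ℂ,
    Γ = z '' Set.Icc 0 L ∧
    ∀ s ∈ Set.Icc (0:ℝ) L, ∀ t ∈ Set.Icc (0:ℝ) L,
      ‖z t - z s‖ ≤ |t - s| ∧ |t - s| ≤ A₀ * ‖z t - z s‖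

/-- **Linear growth of the sum of measures on separated discs along a chord-arc curve**
(from the proof of Theorem 1.1 of Eiderman–Reznikov–Volberg). Let `Γ` be a chord-arc
curve with constant `A₀ > 1` and `D_j = D(x_j, r_j)` be `λ`-separated discs (`λ > 1`)
with centers on `Γ`. If `μ_j` are positive measures with `supp μ_j ⊆ D_j` and linear
growth `μ_j(D(y, s)) ≤ s`, then `μ = Σ μ_j` satisfies `μ(D(x, r)) ≤ C(A₀, λ)·r` for
every disc `D(x, r)`. -/
theorem sum_measure_linear_growth (A₀ lam : ℝ) (hA₀ : 1 < A₀) (hlam : 1 < lam) :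
    ∃ C : ℝ,
      ∀ (Γ : Set ℂ), IsChordArc Γ A₀ →
      ∀ (ι : Type) [Countable ι] (x : ι → ℂ) (r : ι → ℝ) (μ : ι → Measure ℂ),
        (∀ j, 0 < r j) →
        (∀ j, x j ∈ Γ) →
        (Pairwise fun j k => Disjoint (ball (x j) (lam * r j)) (ball (x k) (lam * r k))) →
        (∀ j, (μ j) (ball (x j) (r j))ᶜ = 0) →
        (∀ j (y : ℂ) (s : ℝ), 0 < s → (μ j) (ball y s) ≤ ENNReal.ofReal s) →
        ∀ (y : ℂ) (s : ℝ), 0 < s → (Measure.sum μ) (ball y s) ≤ ENNReal.ofReal (C * s) := by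
  classical
  refine ⟨(4*A₀+1) + (lam/(lam-1))^2, ?_⟩
  rintro Γ ⟨L, hL, z, hΓ, hz⟩ ι _ x r μ hr hxΓ hsep hsupp hgrow y s hs
  have hlam0 : (0:ℝ) < lam := lt_trans one_pos hlam
  have hlam1 : (0:ℝ) < lam - 1 := by linarith
  have hA0 : (0:ℝ) < A₀ := lt_trans one_pos hA₀
  -- parameters of centers on the curve
  have hx' : ∀ j, ∃ u, u ∈ Set.Icc (0:ℝ) L ∧ z u = x j := by
    intro j
    have h := hxΓ j
    rw [hΓ] at h
    exact h
  choose t ht hzt using hx'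
  -- separation of centers
  have hdist : ∀ j k, j ≠ k → lam * r j + lam * r k ≤ dist (x j) (x k) := by
    intro j k hjk
    exact (disjoint_ball_ball_iff (mul_pos hlam0 (hr j)) (mul_pos hlam0 (hr k))).mp (hsep hjk)
  have hxt : ∀ j k, dist (x j) (x k) ≤ dist (t j) (t k) := by
    intro j k
    have h := (hz (t j) (ht j) (t k) (ht k)).1
    rw [hzt j, hzt k] at h
    rw [dist_eq_norm, Real.dist_eq, norm_sub_rev (x j)]
    calc ‖x k - x j‖ ≤ |t k - t j| := h
      _ = |t j - t k| := abs_sub_comm _ _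
  have hta : ∀ j k, dist (t j) (t k) ≤ A₀ * dist (x j) (x k) := by
    intro j k
    have h := (hz (t j) (ht j) (t k) (ht k)).2
    rw [hzt j, hzt k] at h
    rw [Real.dist_eq, dist_eq_norm, norm_sub_rev (x j)]
    calc |t j - t k| = |t k - t j| := abs_sub_comm _ _
      _ ≤ A₀ * ‖x k - x j‖ := h
  set P : ι → Prop := fun j => (ball (x j) (r j) ∩ ball y s).Nonempty with hPdef
  have hnotP : ∀ j, ¬ P j → μ j (ball y s) = 0 := by
    intro j hj
    refine measure_mono_null (fun w hw hw' => hj ⟨w, hw', hw⟩) (hsupp j)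
  have hPy : ∀ j, P j → dist (x j) y < r j + s := by
    rintro j ⟨w, hw1, hw2⟩
    calc dist (x j) y ≤ dist (x j) w + dist w y := dist_triangle _ _ _
      _ < r j + s := by
          rw [mem_ball] at hw1 hw2
          rw [dist_comm (x j) w]
          exact add_lt_add hw1 hw2
  have hterm : ∀ j, μ j (ball y s) ≤ ENNReal.ofReal (r j) := by
    intro j
    calc μ j (ball y s)
        ≤ μ j (ball (x j) (r j) ∪ (ball (x j) (r j))ᶜ) :=
          measure_mono (by rw [union_compl_self]; exact subset_univ _)
      _ ≤ μ j (ball (x j) (r j)) + μ j ((ball (x j) (r j))ᶜ) := measure_union_le _ _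
      _ ≤ ENNReal.ofReal (r j) + 0 :=
          add_le_add (hgrow j _ _ (hr j)) (le_of_eq (hsupp j))
      _ = ENNReal.ofReal (r j) := add_zero _
  rw [Measure.sum_apply _ measurableSet_ball, ENNReal.tsum_eq_iSup_sum]
  refine iSup_le fun F => ?_
  set Fs : Finset ι := (F.filter P).filter (fun j => r j < s) with hFs
  set Fb : Finset ι := (F.filter P).filter (fun j => ¬ r j < s) with hFb
  have hFsmem : ∀ j ∈ Fs, P j ∧ r j < s := by
    intro j hj
    rw [hFs, Finset.mem_filter, Finset.mem_filter] at hj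
    exact ⟨hj.1.2, hj.2⟩
  have hFbmem : ∀ j ∈ Fb, P j ∧ s ≤ r j := by
    intro j hj
    rw [hFb, Finset.mem_filter, Finset.mem_filter] at hj
    exact ⟨hj.1.2, not_lt.mp hj.2⟩
  -- small radii part
  have hsmall : ∑ j ∈ Fs, μ j (ball y s) ≤ ENNReal.ofReal ((4*A₀+1) * s) := by
    rcases Fs.eq_empty_or_nonempty with h | ⟨j0, hj0⟩
    · simp [h]
    · have hsub : ∀ j ∈ Fs, ball (t j) (r j) ⊆ ball (t j0) ((4*A₀+1) * s) := by
        intro j hj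
        refine ball_subset_ball' ?_
        have h1 : dist (x j) y < 2 * s := by
          have := hPy j (hFsmem j hj).1
          have := (hFsmem j hj).2
          linarith
        have h2 : dist (x j0) y < 2 * s := by
          have := hPy j0 (hFsmem j0 hj0).1
          have := (hFsmem j0 hj0).2
          linarith
        have h3 : dist (t j) (t j0) ≤ A₀ * (4 * s) := by
          calc dist (t j) (t j0) ≤ A₀ * dist (x j) (x j0) := hta j j0
            _ ≤ A₀ * (dist (x j) y + dist y (x j0)) :=
                mul_le_mul_of_nonneg_left (dist_triangle _ _ _) hA0.le
            _ ≤ A₀ * (4 * s) := by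
                rw [dist_comm y (x j0)]
                nlinarith
        have h4 := (hFsmem j hj).2
        nlinarith
      have hdisj : (↑Fs : Set ι).PairwiseDisjoint (fun j => ball (t j) (r j)) := by
        intro j _ k _ hjk
        refine ball_disjoint_ball ?_
        calc r j + r k ≤ lam * r j + lam * r k := by nlinarith [hr j, hr k]
          _ ≤ dist (x j) (x k) := hdist j k hjk
          _ ≤ dist (t j) (t k) := hxt j k
      have hvol : ∑ j ∈ Fs, volume (ball (t j) (r j))
          ≤ volume (ball (t j0) ((4*A₀+1) * s)) := by
        rw [← measure_biUnion_finset hdisj (fun b _ => measurableSet_ball)]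
        exact measure_mono (Set.iUnion₂_subset hsub)
      simp only [Real.volume_ball] at hvol
      have hvol2 : 2 * ∑ j ∈ Fs, ENNReal.ofReal (r j)
          ≤ 2 * ENNReal.ofReal ((4*A₀+1) * s) := by
        rw [Finset.mul_sum]
        calc ∑ j ∈ Fs, 2 * ENNReal.ofReal (r j)
            = ∑ j ∈ Fs, ENNReal.ofReal (2 * r j) := by
              refine Finset.sum_congr rfl fun j _ => ?_
              rw [ENNReal.ofReal_mul zero_le_two, ENNReal.ofReal_ofNat]
          _ ≤ ENNReal.ofReal (2 * ((4*A₀+1) * s)) := hvol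
          _ = 2 * ENNReal.ofReal ((4*A₀+1) * s) := by
              rw [ENNReal.ofReal_mul zero_le_two, ENNReal.ofReal_ofNat]
      have hvol3 : ∑ j ∈ Fs, ENNReal.ofReal (r j) ≤ ENNReal.ofReal ((4*A₀+1) * s) :=
        (ENNReal.mul_le_mul_iff_right two_ne_zero ENNReal.ofNat_ne_top).mp hvol2
      exact le_trans (Finset.sum_le_sum fun j _ => hterm j) hvol3
  -- big radii part
  have hbig : ∑ j ∈ Fb, μ j (ball y s) ≤ ENNReal.ofReal ((lam/(lam-1))^2 * s) := by
    have hp : ∀ j ∈ Fb, ∃ w : ℂ, dist w (x j) < r j ∧ dist w y < s := by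
      intro j hj
      obtain ⟨w, hw1, hw2⟩ := (hFbmem j hj).1
      exact ⟨w, mem_ball.mp hw1, mem_ball.mp hw2⟩
    choose! p hp1 hp2 using hp
    have hsub1 : ∀ j ∈ Fb, ball (p j) ((lam-1) * s) ⊆ ball (x j) (lam * r j) := by
      intro j hj
      refine ball_subset_ball' ?_
      have h1 := hp1 j hj
      have h2 := (hFbmem j hj).2
      nlinarith
    have hsub2 : ∀ j ∈ Fb, ball (p j) ((lam-1) * s) ⊆ ball y (lam * s) := by
      intro j hj
      refine ball_subset_ball' ?_
      have h1 := hp2 j hj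
      nlinarith
    have hdisj : (↑Fb : Set ι).PairwiseDisjoint (fun j => ball (p j) ((lam-1) * s)) := by
      intro j hj k hk hjk
      exact (hsep hjk).mono (hsub1 j hj) (hsub1 k hk)
    have hvol : ∑ j ∈ Fb, volume (ball (p j) ((lam-1) * s)) ≤ volume (ball y (lam * s)) := by
      rw [← measure_biUnion_finset hdisj (fun b _ => measurableSet_ball)]
      exact measure_mono (Set.iUnion₂_subset hsub2)
    simp only [Complex.volume_ball, Finset.sum_const, nsmul_eq_mul] at hvol
    rw [← mul_assoc] at hvol
    have hπ : ((NNReal.pi : ℝ≥0∞)) ≠ 0 := by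
      simp [NNReal.pi_ne_zero]
    have hvol2 : (Fb.card : ℝ≥0∞) * ENNReal.ofReal ((lam-1) * s) ^ 2
        ≤ ENNReal.ofReal (lam * s) ^ 2 :=
      (ENNReal.mul_le_mul_iff_left hπ ENNReal.coe_ne_top).mp hvol
    have hfin : (ENNReal.ofReal (lam * s) ^ 2) ≠ ⊤ := by
      exact ENNReal.pow_ne_top ENNReal.ofReal_ne_top
    have hcard : (Fb.card : ℝ) * ((lam-1) * s)^2 ≤ (lam * s)^2 := by
      have := ENNReal.toReal_mono hfin hvol2
      rw [ENNReal.toReal_mul, ENNReal.toReal_pow, ENNReal.toReal_pow,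
        ENNReal.toReal_natCast, ENNReal.toReal_ofReal (by positivity),
        ENNReal.toReal_ofReal (by positivity)] at this
      exact this
    have hcard2 : (Fb.card : ℝ) ≤ (lam/(lam-1))^2 := by
      rw [div_pow, le_div_iff₀ (by positivity)]
      nlinarith [sq_nonneg s, sq_nonneg (lam-1), mul_pos hs hs]
    calc ∑ j ∈ Fb, μ j (ball y s)
        ≤ ∑ _j ∈ Fb, ENNReal.ofReal s :=
          Finset.sum_le_sum fun j _ => hgrow j y s hs
      _ = (Fb.card : ℝ≥0∞) * ENNReal.ofReal s := by
          rw [Finset.sum_const, nsmul_eq_mul]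
      _ = ENNReal.ofReal ((Fb.card : ℝ) * s) := by
          rw [ENNReal.ofReal_mul (by positivity), ENNReal.ofReal_natCast]
      _ ≤ ENNReal.ofReal ((lam/(lam-1))^2 * s) :=
          ENNReal.ofReal_le_ofReal (mul_le_mul_of_nonneg_right hcard2 hs.le)
  -- assemble
  have hsplit : ∑ j ∈ F, μ j (ball y s)
      = ∑ j ∈ Fs, μ j (ball y s) + ∑ j ∈ Fb, μ j (ball y s) := by
    have h0 : ∑ j ∈ F.filter (fun j => ¬ P j), μ j (ball y s) = 0 :=
      Finset.sum_eq_zero fun j hj => hnotP j (Finset.mem_filter.mp hj).2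
    calc ∑ j ∈ F, μ j (ball y s)
        = ∑ j ∈ F.filter P, μ j (ball y s)
          + ∑ j ∈ F.filter (fun j => ¬ P j), μ j (ball y s) :=
          (Finset.sum_filter_add_sum_filter_not F P _).symm
      _ = ∑ j ∈ F.filter P, μ j (ball y s) := by rw [h0, add_zero]
      _ = ∑ j ∈ Fs, μ j (ball y s) + ∑ j ∈ Fb, μ j (ball y s) :=
          (Finset.sum_filter_add_sum_filter_not (F.filter P) (fun j => r j < s) _).symm
  rw [hsplit]
  calc ∑ j ∈ Fs, μ j (ball y s) + ∑ j ∈ Fb, μ j (ball y s)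
      ≤ ENNReal.ofReal ((4*A₀+1) * s) + ENNReal.ofReal ((lam/(lam-1))^2 * s) :=
        add_le_add hsmall hbig
    _ = ENNReal.ofReal (((4*A₀+1) + (lam/(lam-1))^2) * s) := by
        rw [← ENNReal.ofReal_add (by positivity) (by positivity)]
        ring_nf
end
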